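/- arXiv:1407.3089 — 2 statements merged into one kernel-verified Lean document; each statement's English description precedes it below -/
import Mathlib

section
/- Suppose Y is independently marked and second-order intensity-reweighted stationary. Then for any Borel mark sets C, D with ν(C), ν(D) > 0, the inhomogeneous cross K-function equals the inhomogeneous K-function of the ground process: K_inhom^{CD}(r) = ∫_{B(0,r)} g_g(0, z) dz, independent of C and D. -/
open MeasureTheory

/-- Independently marked SOIRS processes: the inhomogeneous cross `K`-function
`K_inhom^{CD}(r) = (1/(ν(C)ν(D))) ∫_C ∫_{B(0,r)×D} g((0,m₁),(z,m₂)) dν(m₁) dz dν(m₂)`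
equals `∫_{B(0,r)} g_g(0,z) dz`, the inhomogeneous `K`-function of the ground process,
independently of the mark sets `C` and `D`. -/
theorem stmt_9 {d : ℕ} {M : Type*} [MeasurableSpace M]
    (ν : Measure M) [IsFiniteMeasure ν]
    (f : EuclideanSpace ℝ (Fin d) → M → ℝ) (lamg : EuclideanSpace ℝ (Fin d) → ℝ)
    (ρ2 : (EuclideanSpace ℝ (Fin d) × M) → (EuclideanSpace ℝ (Fin d) × M) → ℝ)
    (ρ2g : EuclideanSpace ℝ (Fin d) → EuclideanSpace ℝ (Fin d) → ℝ)
    (lam : EuclideanSpace ℝ (Fin d) × M → ℝ)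
    (g : (EuclideanSpace ℝ (Fin d) × M) → (EuclideanSpace ℝ (Fin d) × M) → ℝ)
    (gg : EuclideanSpace ℝ (Fin d) → EuclideanSpace ℝ (Fin d) → ℝ)
    -- intensity decomposition and nondegeneracy
    (hlam : ∀ z m, lam (z, m) = f z m * lamg z)
    (hf : ∀ z m, f z m ≠ 0) (hlamg : ∀ z, lamg z ≠ 0)
    -- independent marking: the two-point mark density factorizes
    (hρ2 : ∀ z₁ m₁ z₂ m₂, ρ2 (z₁, m₁) (z₂, m₂) = f z₁ m₁ * f z₂ m₂ * ρ2g z₁ z₂)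
    -- pair correlation functions
    (hg : ∀ p q, g p q = ρ2 p q / (lam p * lam q))
    (hgg : ∀ z₁ z₂, gg z₁ z₂ = ρ2g z₁ z₂ / (lamg z₁ * lamg z₂))
    -- SOIRS: the ground pair correlation function is translation invariant
    (hTI : ∀ a z₁ z₂, gg (z₁ + a) (z₂ + a) = gg z₁ z₂)
    (C D : Set M) (hCm : MeasurableSet C) (hDm : MeasurableSet D)
    (hC : 0 < ν C) (hD : 0 < ν D) (r : ℝ) :
    (1 / ((ν C).toReal * (ν D).toReal)) *
      ∫ m₁ in C,
        (∫ p in Metric.closedBall (0 : EuclideanSpace ℝ (Fin d)) r ×ˢ D,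
          g ((0 : EuclideanSpace ℝ (Fin d)), m₁) p
            ∂((volume : Measure (EuclideanSpace ℝ (Fin d))).prod ν)) ∂ν =
      ∫ z in Metric.closedBall (0 : EuclideanSpace ℝ (Fin d)) r,
        gg (0 : EuclideanSpace ℝ (Fin d)) z := by
  have key : ∀ (m₁ : M) (p : EuclideanSpace ℝ (Fin d) × M),
      g ((0 : EuclideanSpace ℝ (Fin d)), m₁) p = gg 0 p.1 * (1 : ℝ) := by
    rintro m₁ ⟨z, m₂⟩
    simp only [hg, hρ2, hlam, hgg, mul_one]
    rw [show f 0 m₁ * lamg 0 * (f z m₂ * lamg z)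
        = f 0 m₁ * f z m₂ * (lamg 0 * lamg z) by ring,
      mul_div_mul_left _ _ (mul_ne_zero (hf 0 m₁) (hf z m₂))]
  have hCt : (ν C).toReal ≠ 0 := (ENNReal.toReal_pos hC.ne' (measure_ne_top ν C)).ne'
  have hDt : (ν D).toReal ≠ 0 := (ENNReal.toReal_pos hD.ne' (measure_ne_top ν D)).ne'
  have h1 : ∀ m₁ : M,
      (∫ p in Metric.closedBall (0 : EuclideanSpace ℝ (Fin d)) r ×ˢ D,
        g ((0 : EuclideanSpace ℝ (Fin d)), m₁) p
          ∂((volume : Measure (EuclideanSpace ℝ (Fin d))).prod ν)) =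
      (∫ z in Metric.closedBall (0 : EuclideanSpace ℝ (Fin d)) r, gg 0 z) * (ν D).toReal := by
    intro m₁
    simp_rw [key m₁]
    rw [setIntegral_prod_mul (fun z => gg 0 z) (fun _ => (1 : ℝ))]
    simp
    exact Or.inl rfl
  simp_rw [h1]
  rw [integral_const]
  simp only [Measure.real, Measure.restrict_apply_univ, smul_eq_mul]
  field_simp
end

section
/- Let C ⊂ M be a Borel mark set with 0 < ν(C) < ν(M), let D = M ∖ C, and suppose Y is SOIRS with Y_C and Y_D independent. Then the pair correlation function satisfies g((0,m_1),(z,m_2)) = 1 for m_1 ∈ C, m_2 ∈ D (and symmetrically), and consequently K_inhom^{CM}(r) = (ν(D)/ν(M)) ω_d r^d + (ν(C)/ν(M)) K_inhom^{CC}(r), where ω_d r^d = ℓ(B(0,r)). -/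
open MeasureTheory

/-- Mixture formula for the inhomogeneous `K`-function: if `Y` is SOIRS and `Y_C`, `Y_D`
(`D = M∖C`) are independent, then `g((0,m₁),(z,m₂)) = 1` for `m₁ ∈ C`, `m₂ ∈ D` (and
symmetrically) and `K_inhom^{CM}(r) = (ν(D)/ν(M)) ℓ(B(0,r)) + (ν(C)/ν(M)) K_inhom^{CC}(r)`. -/
theorem stmt_11 {d : ℕ} {M : Type*} [MeasurableSpace M]
    (ν : Measure M) [IsFiniteMeasure ν]
    (ρ2 : (EuclideanSpace ℝ (Fin d) × M) → (EuclideanSpace ℝ (Fin d) × M) → ℝ)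
    (lam : EuclideanSpace ℝ (Fin d) × M → ℝ) (hlam : ∀ p, lam p ≠ 0)
    (g : (EuclideanSpace ℝ (Fin d) × M) → (EuclideanSpace ℝ (Fin d) × M) → ℝ)
    (hg : ∀ p q, g p q = ρ2 p q / (lam p * lam q))
    -- SOIRS: translation invariance of `g` in the spatial coordinate
    (hTI : ∀ a z₁ m₁ z₂ m₂, g (z₁ + a, m₁) (z₂ + a, m₂) = g (z₁, m₁) (z₂, m₂))
    (C : Set M) (hCm : MeasurableSet C) (hC : 0 < ν C) (hCc : 0 < ν Cᶜ)
    -- independence of `Y_C` and `Y_D`: the two-point density factorizes across `C` and `Cᶜ`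
    (hFact : ∀ z₁ m₁ z₂ m₂, (m₁ ∈ C ∧ m₂ ∈ Cᶜ) ∨ (m₁ ∈ Cᶜ ∧ m₂ ∈ C) →
      ρ2 (z₁, m₁) (z₂, m₂) = lam (z₁, m₁) * lam (z₂, m₂))
    (r : ℝ) (hr : 0 ≤ r)
    -- integrability regularity
    (hInt : ∀ m₁ ∈ C, IntegrableOn (fun p => g ((0 : EuclideanSpace ℝ (Fin d)), m₁) p)
      (Metric.closedBall (0 : EuclideanSpace ℝ (Fin d)) r ×ˢ (Set.univ : Set M))
      ((volume : Measure (EuclideanSpace ℝ (Fin d))).prod ν))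
    (hIntC : IntegrableOn (fun m₁ =>
      ∫ p in Metric.closedBall (0 : EuclideanSpace ℝ (Fin d)) r ×ˢ C,
        g ((0 : EuclideanSpace ℝ (Fin d)), m₁) p
          ∂((volume : Measure (EuclideanSpace ℝ (Fin d))).prod ν)) C ν) :
    (∀ (z : EuclideanSpace ℝ (Fin d)) m₁ m₂, m₁ ∈ C → m₂ ∈ Cᶜ →
        g ((0 : EuclideanSpace ℝ (Fin d)), m₁) (z, m₂) = 1) ∧
    (1 / ((ν C).toReal * (ν (Set.univ : Set M)).toReal)) *
        ∫ m₁ in C,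
          (∫ p in Metric.closedBall (0 : EuclideanSpace ℝ (Fin d)) r ×ˢ (Set.univ : Set M),
            g ((0 : EuclideanSpace ℝ (Fin d)), m₁) p
              ∂((volume : Measure (EuclideanSpace ℝ (Fin d))).prod ν)) ∂ν =
      ((ν Cᶜ).toReal / (ν (Set.univ : Set M)).toReal) *
          (volume (Metric.closedBall (0 : EuclideanSpace ℝ (Fin d)) r)).toReal +
        ((ν C).toReal / (ν (Set.univ : Set M)).toReal) *
          ((1 / ((ν C).toReal * (ν C).toReal)) *
            ∫ m₁ in C,
              (∫ p in Metric.closedBall (0 : EuclideanSpace ℝ (Fin d)) r ×ˢ C,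
                g ((0 : EuclideanSpace ℝ (Fin d)), m₁) p
                  ∂((volume : Measure (EuclideanSpace ℝ (Fin d))).prod ν)) ∂ν) := by

  classical
  set B := Metric.closedBall (0 : EuclideanSpace ℝ (Fin d)) r with hB
  set μ := ((volume : Measure (EuclideanSpace ℝ (Fin d))).prod ν) with hμ
  have hone : ∀ (z : EuclideanSpace ℝ (Fin d)) m₁ m₂, m₁ ∈ C → m₂ ∈ Cᶜ →
      g ((0 : EuclideanSpace ℝ (Fin d)), m₁) (z, m₂) = 1 := by
    intro z m₁ m₂ h₁ h₂
    rw [hg, hFact 0 m₁ z m₂ (Or.inl ⟨h₁, h₂⟩), div_self]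
    exact mul_ne_zero (hlam _) (hlam _)
  refine ⟨hone, ?_⟩
  have hBm : MeasurableSet B := measurableSet_closedBall
  have hBfin : volume B < ⊤ := by
    exact MeasureTheory.measure_closedBall_lt_top
  -- split the inner integral
  have hsplit : ∀ m₁ ∈ C,
      (∫ p in B ×ˢ (Set.univ : Set M), g ((0 : EuclideanSpace ℝ (Fin d)), m₁) p ∂μ)
      = (∫ p in B ×ˢ C, g ((0 : EuclideanSpace ℝ (Fin d)), m₁) p ∂μ)
        + (volume B).toReal * (ν Cᶜ).toReal := by
    intro m₁ hm₁
    have hdisj : Disjoint (B ×ˢ C) (B ×ˢ Cᶜ) := by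
      apply Set.disjoint_left.2
      rintro ⟨z, m⟩ ⟨_, hm⟩ ⟨_, hm'⟩
      exact hm' hm
    have hmeas : MeasurableSet (B ×ˢ Cᶜ) := hBm.prod hCm.compl
    have hmeas' : MeasurableSet (B ×ˢ C) := hBm.prod hCm
    have hi1 : IntegrableOn (fun p => g ((0 : EuclideanSpace ℝ (Fin d)), m₁) p) (B ×ˢ C) μ :=
      (hInt m₁ hm₁).mono_set (by apply Set.prod_mono_right; exact Set.subset_univ _)
    have hi2 : IntegrableOn (fun p => g ((0 : EuclideanSpace ℝ (Fin d)), m₁) p) (B ×ˢ Cᶜ) μ :=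
      (hInt m₁ hm₁).mono_set (by apply Set.prod_mono_right; exact Set.subset_univ _)
    have hu : B ×ˢ (Set.univ : Set M) = (B ×ˢ C) ∪ (B ×ˢ Cᶜ) := by
      rw [← Set.prod_union, Set.union_compl_self]
    rw [hu, MeasureTheory.setIntegral_union hdisj hmeas hi1 hi2]
    congr 1
    have hcongr : ∀ p ∈ B ×ˢ Cᶜ, g ((0 : EuclideanSpace ℝ (Fin d)), m₁) p = 1 := by
      rintro ⟨z, m⟩ ⟨_, hm⟩
      exact hone z m₁ m hm₁ hm
    rw [MeasureTheory.setIntegral_congr_fun hmeas hcongr, MeasureTheory.setIntegral_const]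
    rw [hμ, measureReal_def, Measure.prod_prod, ENNReal.toReal_mul, smul_eq_mul, mul_one]
  -- rewrite the outer integral
  have houter :
      (∫ m₁ in C, (∫ p in B ×ˢ (Set.univ : Set M),
          g ((0 : EuclideanSpace ℝ (Fin d)), m₁) p ∂μ) ∂ν)
      = (∫ m₁ in C, (∫ p in B ×ˢ C, g ((0 : EuclideanSpace ℝ (Fin d)), m₁) p ∂μ) ∂ν)
        + (ν C).toReal * ((volume B).toReal * (ν Cᶜ).toReal) := by
    rw [MeasureTheory.setIntegral_congr_fun hCm hsplit]
    rw [MeasureTheory.integral_add hIntC (integrableOn_const (measure_lt_top ν C).ne)]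
    congr 1
    rw [MeasureTheory.setIntegral_const, smul_eq_mul, measureReal_def]
  rw [houter]
  -- algebra
  have hCfin := measure_lt_top ν C
  have ha : (0:ℝ) < (ν C).toReal := ENNReal.toReal_pos hC.ne' hCfin.ne
  have hu : (0:ℝ) < (ν (Set.univ : Set M)).toReal := by
    refine ENNReal.toReal_pos ?_ (measure_lt_top ν _).ne
    exact fun h => hC.ne' (le_antisymm (h ▸ measure_mono (Set.subset_univ C)) zero_le)
  set S := (∫ m₁ in C, (∫ p in B ×ˢ C, g ((0 : EuclideanSpace ℝ (Fin d)), m₁) p ∂μ) ∂ν)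
  field_simp
  ring
end
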